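/- For every prime p and every nonnegative integer n, the derangement numbers satisfy D_{n+p} ≡ -D_n (mod p). -/
import Mathlib

lemma numDerangements_succ_zmod (p : ℕ) (k : ℕ) :
    (numDerangements (k + 1) : ZMod p) = (k + 1) * (numDerangements k : ZMod p) - (-1) ^ k := by
  have := numDerangements_succ k
  have h := congrArg (Int.cast : ℤ → ZMod p) this
  push_cast at h
  exact h

lemma neg_one_pow_prime (p : ℕ) (hp : p.Prime) : ((-1 : ZMod p)) ^ p = -1 := by
  rcases hp.eq_two_or_odd' with h | h
  · subst h; decide
  · exact h.neg_one_pow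

/-- For every prime `p` and every `n ≥ 0`, the derangement numbers satisfy
`D_{n+p} ≡ -D_n (mod p)`. -/
theorem numDerangements_add_prime (p : ℕ) (hp : p.Prime) (n : ℕ) :
    (numDerangements (n + p) : ZMod p) = -(numDerangements n : ZMod p) := by
  have hp0 : ((p : ZMod p)) = 0 := ZMod.natCast_self p
  induction n with
  | zero =>
    obtain ⟨q, rfl⟩ := Nat.exists_eq_succ_of_ne_zero hp.ne_zero
    have := numDerangements_succ_zmod (q + 1) q
    rw [show (0 : ℕ) + (q + 1) = q + 1 by ring, this]
    have : ((q : ZMod (q+1)) + 1) = 0 := by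
      have := ZMod.natCast_self (q + 1)
      push_cast at this; exact this
    rw [this, zero_mul, zero_sub]
    have hpow := neg_one_pow_prime (q + 1) hp
    rw [pow_succ] at hpow
    simp only [numDerangements_zero, Nat.cast_one]
    have : (-1 : ZMod (q+1)) ^ q * -1 = -1 := hpow
    -- -(-1)^q = -1 * ... ; from hpow: (-1)^q * -1 = -1 hence (-1)^q = 1? no: multiply both sides by -1
    have h2 : (-1 : ZMod (q+1)) ^ q = 1 := by
      have := congrArg (· * (-1 : ZMod (q+1))) hpow
      simpa [mul_assoc] using this
    rw [h2]
  | succ n ih =>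
    have h1 := numDerangements_succ_zmod p (n + p)
    have h2 := numDerangements_succ_zmod p n
    rw [show n + 1 + p = n + p + 1 by ring, h1, ih, h2]
    push_cast
    rw [hp0]
    have hpow := neg_one_pow_prime p hp
    rw [pow_add, hpow]
    ring
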